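/- Let n ≥ 1 and let x, v₁, v₂ ∈ ℝⁿ with ‖v₁‖ = ‖v₂‖ = 1. Set b₁ = ⟪x, v₁⟫, b₂ = ⟪x, v₂⟫ and α = ⟪v₁, v₂⟫, and assume |α| < 1 and b₁ - α·b₂ ≠ 0. Define s = (b₂ - α·b₁)/(b₁ - α·b₂). Then for every t ∈ ℝ, |⟪x, v₁ + t·v₂⟫| / ‖v₁ + t·v₂‖ ≤ |⟪x, v₁ + s·v₂⟫| / ‖v₁ + s·v₂‖; that is, s maximizes the function f(t) = |⟪x, v₁ + t·v₂⟫| / ‖v₁ + t·v₂‖ over all real t. -/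

import Mathlib

open scoped RealInnerProductSpace

/-- the value `s = (b₂ - α b₁)/(b₁ - α b₂)` maximizes
`f(t) = |⟪x, v₁ + t v₂⟫| / ‖v₁ + t v₂‖` over all real `t`. -/
theorem sap_optimal_combination_maximizes {n : ℕ} (hn : 1 ≤ n)
    (x v₁ v₂ : EuclideanSpace ℝ (Fin n))
    (hv₁ : ‖v₁‖ = 1) (hv₂ : ‖v₂‖ = 1)
    (b₁ b₂ α : ℝ) (hb₁ : b₁ = ⟪x, v₁⟫) (hb₂ : b₂ = ⟪x, v₂⟫) (hα : α = ⟪v₁, v₂⟫)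
    (hαlt : |α| < 1) (hden : b₁ - α * b₂ ≠ 0)
    (s : ℝ) (hs : s = (b₂ - α * b₁) / (b₁ - α * b₂)) :
    ∀ t : ℝ,
      |⟪x, v₁ + t • v₂⟫| / ‖v₁ + t • v₂‖ ≤ |⟪x, v₁ + s • v₂⟫| / ‖v₁ + s • v₂‖ := by
  have hα2 : α ^ 2 < 1 := by
    have := abs_lt.mp hαlt
    nlinarith [this.1, this.2]
  have hinner : ∀ t : ℝ, ⟪x, v₁ + t • v₂⟫ = b₁ + t * b₂ := by
    intro t
    rw [inner_add_right, real_inner_smul_right, hb₁, hb₂]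
  have hNpos : ∀ t : ℝ, (0:ℝ) < 1 + 2 * α * t + t ^ 2 := by
    intro t
    nlinarith [sq_nonneg (t + α)]
  have hnorm : ∀ t : ℝ, ‖v₁ + t • v₂‖ = Real.sqrt (1 + 2 * α * t + t ^ 2) := by
    intro t
    rw [show (1 + 2 * α * t + t ^ 2 : ℝ) = ‖v₁ + t • v₂‖ ^ 2 by
      rw [norm_add_sq_real, real_inner_smul_right, norm_smul, hv₁, hv₂, hα]
      simp [mul_pow, sq_abs]; ring]
    exact (Real.sqrt_sq (norm_nonneg _)).symm
  intro t
  rw [hinner, hinner, hnorm, hnorm]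
  have key : ∀ u : ℝ, (b₁ + u * b₂) ^ 2 / (1 + 2 * α * u + u ^ 2)
      ≤ (b₁ + s * b₂) ^ 2 / (1 + 2 * α * s + s ^ 2) := by
    intro u
    have heq : (b₁ + s * b₂) ^ 2 / (1 + 2 * α * s + s ^ 2)
        = (b₁ ^ 2 - 2 * α * b₁ * b₂ + b₂ ^ 2) / (1 - α ^ 2) := by
      rw [div_eq_div_iff (hNpos s).ne' (by nlinarith : (1:ℝ) - α ^ 2 ≠ 0)]
      rw [hs]
      have hden' : b₁ - b₂ * α ≠ 0 := by rwa [mul_comm]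
      field_simp
      ring
    rw [heq, div_le_div_iff₀ (hNpos u) (by linarith)]
    nlinarith [sq_nonneg ((b₂ - α * b₁) - u * (b₁ - α * b₂))]
  have habs : ∀ u : ℝ, |b₁ + u * b₂| / Real.sqrt (1 + 2 * α * u + u ^ 2)
      = Real.sqrt ((b₁ + u * b₂) ^ 2 / (1 + 2 * α * u + u ^ 2)) := by
    intro u
    rw [Real.sqrt_div (sq_nonneg _), Real.sqrt_sq_eq_abs]
  rw [habs, habs]
  exact Real.sqrt_le_sqrt (key t)
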